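/- Let R be a principal ideal domain, (M,λ) a formed space over R, and l : M → R any R-linear functional. Then g_H(ker l, λ restricted to ker l) ≥ g_H(M,λ) − 1. -/

import Mathlib

set_option linter.unusedSectionVars false
set_option maxHeartbeats 1000000

section GHAux
variable {R : Type} [CommRing R] [IsDomain R] [IsPrincipalIdealRing R]
variable {M : Type} [AddCommGroup M] [Module R M]

lemma crt_step (m : R) (hm : m ≠ 0) : ∀ x y : R, (∃ u v w, u*x + v*y + w*m = 1) →
    ∃ c, IsCoprime (x + c*y) m := by
  induction m using WfDvdMonoid.induction_on_irreducible with
  | zero => exact absurd rfl hm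
  | unit u hu =>
    intro x y _
    obtain ⟨w, hw⟩ := hu.exists_left_inv
    exact ⟨0, 0, w, by rw [hw]; ring⟩
  | mul a i ha hi ih =>
    intro x y hxy
    obtain ⟨u, v, w, huvw⟩ := hxy
    obtain ⟨c', hc'⟩ := ih ha x y ⟨u, v, w * i, by rw [← huvw]; ring⟩
    have hnotboth : ¬ (i ∣ x ∧ i ∣ y) := by
      rintro ⟨hx, hy⟩
      have h1 : i ∣ 1 := by
        rw [← huvw]
        exact dvd_add (dvd_add (hx.mul_left u) (hy.mul_left v)) ⟨w * a, by ring⟩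
      exact hi.not_isUnit (isUnit_of_dvd_one h1)
    have key : ∃ t, IsCoprime (x + (c' + t*a)*y) i := by
      by_cases hiy : i ∣ y
      · refine ⟨0, ((hi.coprime_iff_not_dvd).mpr ?_).symm⟩
        intro hdvd
        have hix : i ∣ x := by
          have h2 : i ∣ (c' + 0*a) * y := (hiy.mul_left _)
          have := dvd_sub hdvd h2
          simpa using this
        exact hnotboth ⟨hix, hiy⟩
      · by_cases hia : i ∣ a
        · refine ⟨0, ((hi.coprime_iff_not_dvd).mpr ?_).symm⟩
          intro hdvd
          obtain ⟨α, β, hαβ⟩ := hc'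
          have h1 : i ∣ 1 := by
            rw [← hαβ]
            refine dvd_add ?_ (hia.mul_left β)
            have : (x + (0 + 0*a)*y) = x + c'*y - c'*y + 0 := by ring
            exact Dvd.dvd.mul_left (by simpa using hdvd) α
          exact hi.not_isUnit (isUnit_of_dvd_one h1)
        · -- field case
          have hprime : Prime i := hi.prime
          have hmax : (Ideal.span {i} : Ideal R).IsMaximal :=
            PrincipalIdealRing.isMaximal_of_irreducible hi
          letI : Field (R ⧸ Ideal.span {i}) := Ideal.Quotient.field _
          set φ := Ideal.Quotient.mk (Ideal.span {i}) with hφ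
          have hzero : ∀ z : R, φ z = 0 ↔ i ∣ z := by
            intro z
            rw [Ideal.Quotient.eq_zero_iff_mem, Ideal.mem_span_singleton]
          have hay : φ (a * y) ≠ 0 := by
            intro h0
            rcases hprime.2.2 _ _ ((hzero _).mp h0) with h | h
            exacts [hia h, hiy h]
          obtain ⟨t, ht⟩ := Ideal.Quotient.mk_surjective
            ((φ (a*y))⁻¹ * (1 - φ (x + c'*y)) : R ⧸ Ideal.span {i})
          refine ⟨t, ((hi.coprime_iff_not_dvd).mpr ?_).symm⟩
          intro hdvd
          have h1 : φ (x + (c' + t*a)*y) = 1 := by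
            have e : (x + (c' + t*a)*y) = (x + c'*y) + t * (a*y) := by ring
            rw [e, map_add, map_mul, ht]
            have e2 : (φ (a*y))⁻¹ * (1 - φ (x + c'*y)) * φ (a*y) = 1 - φ (x + c'*y) := by
              rw [mul_comm, ← mul_assoc, mul_inv_cancel₀ hay, one_mul]
            rw [hφ] at e2 ⊢
            rw [e2]
            ring
          rw [← hzero] at hdvd
          rw [hdvd] at h1
          exact one_ne_zero h1.symm
    obtain ⟨t, hti⟩ := key
    refine ⟨c' + t*a, IsCoprime.mul_right hti ?_⟩
    have : x + (c' + t*a)*y = (x + c'*y) + a * (t*y) := by ring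
    rw [this]
    exact hc'.add_mul_left_left _

def HypFam (lam : M →ₗ[R] M →ₗ[R] R) {g : ℕ} (e f : Fin g → M) : Prop :=
  (∀ i j, lam (e i) (f j) = if i = j then 1 else 0) ∧
  (∀ i j, lam (e i) (e j) = 0) ∧ (∀ i j, lam (f i) (f j) = 0)

lemma lam_skew (lam : M →ₗ[R] M →ₗ[R] R) (halt : ∀ v : M, lam v v = 0) (u v : M) :
    lam u v = - lam v u := by
  have h := halt (u + v)
  simp only [map_add, LinearMap.add_apply, halt u, halt v] at h
  linear_combination h

lemma move_form (lam : M →ₗ[R] M →ₗ[R] R) (halt : ∀ v : M, lam v v = 0)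
    (x u v : M) (c : R) :
    lam (u + (c * lam u x) • x) (v + (c * lam v x) • x) = lam u v := by
  simp only [map_add, map_smul, LinearMap.add_apply, LinearMap.smul_apply, smul_eq_mul]
  rw [halt x, lam_skew lam halt x v]
  ring

lemma move_hyp (lam : M →ₗ[R] M →ₗ[R] R) (halt : ∀ v : M, lam v v = 0)
    {g : ℕ} {e f : Fin g → M} (h : HypFam lam e f) (x : M) (c : R) :
    HypFam lam (fun i => e i + (c * lam (e i) x) • x)
      (fun i => f i + (c * lam (f i) x) • x) := by
  obtain ⟨h1, h2, h3⟩ := h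
  refine ⟨fun i j => ?_, fun i j => ?_, fun i j => ?_⟩ <;>
    rw [move_form lam halt] <;> [exact h1 i j; exact h2 i j; exact h3 i j]

lemma move_l (lam : M →ₗ[R] M →ₗ[R] R) (l : M →ₗ[R] R) (u x : M) (c : R) :
    l (u + (c * lam u x) • x) = l u + c * lam u x * l x := by
  simp [map_add, map_smul, smul_eq_mul, mul_assoc]

lemma move_orth (lam : M →ₗ[R] M →ₗ[R] R) (v u x : M) (c : R) (hvx : lam v x = 0) :
    lam v (u + (c * lam u x) • x) = lam v u := by
  simp [map_add, map_smul, smul_eq_mul, hvx]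

/-- the key step: a symplectic transvection supported on the first two pairs. -/
lemma step (lam : M →ₗ[R] M →ₗ[R] R) (halt : ∀ v : M, lam v v = 0) (l : M →ₗ[R] R)
    {n : ℕ} {e f : Fin (n+2) → M} (h : HypFam lam e f) (p q r s c : R) :
    ∃ e' f' : Fin (n+2) → M, HypFam lam e' f' ∧
      (∀ v : M, (∀ i, lam v (e i) = 0) → (∀ i, lam v (f i) = 0) →
        (∀ i, lam v (e' i) = 0) ∧ (∀ i, lam v (f' i) = 0)) ∧
      l (e' 0) = l (e 0) + c * q * (p * l (e 0) + q * l (f 0) + r * l (e 1) + s * l (f 1)) ∧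
      l (f' 0) = l (f 0) - c * p * (p * l (e 0) + q * l (f 0) + r * l (e 1) + s * l (f 1)) ∧
      l (e' 1) = l (e 1) + c * s * (p * l (e 0) + q * l (f 0) + r * l (e 1) + s * l (f 1)) ∧
      l (f' 1) = l (f 1) - c * r * (p * l (e 0) + q * l (f 0) + r * l (e 1) + s * l (f 1)) := by
  obtain ⟨h1, h2, h3⟩ := h
  set x : M := p • e 0 + q • f 0 + r • e 1 + s • f 1 with hx
  have hne : (0 : Fin (n+2)) ≠ 1 := Fin.zero_ne_one
  have pair : ∀ u : M, lam u x = p * lam u (e 0) + q * lam u (f 0) + r * lam u (e 1)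
      + s * lam u (f 1) := by
    intro u
    simp [hx, map_add, map_smul, smul_eq_mul]
  have hex0 : lam (e 0) x = q := by
    rw [pair, h1 0 0, h1 0 1, h2 0 0, h2 0 1, if_pos rfl, if_neg hne]; ring
  have hfx0 : lam (f 0) x = -p := by
    rw [pair, h3 0 0, h3 0 1,
      lam_skew lam halt (f 0) (e 0), lam_skew lam halt (f 0) (e 1),
      h1 0 0, h1 1 0, if_pos rfl, if_neg (Ne.symm hne)]; ring
  have hex1 : lam (e 1) x = s := by
    rw [pair, h1 1 0, h1 1 1, h2 1 0, h2 1 1, if_pos rfl, if_neg (Ne.symm hne)]; ring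
  have hfx1 : lam (f 1) x = -r := by
    rw [pair, h3 1 0, h3 1 1,
      lam_skew lam halt (f 1) (e 0), lam_skew lam halt (f 1) (e 1),
      h1 0 1, h1 1 1, if_pos rfl, if_neg hne]; ring
  have hlx : l x = p * l (e 0) + q * l (f 0) + r * l (e 1) + s * l (f 1) := by
    simp [hx, map_add, map_smul, smul_eq_mul]
  refine ⟨fun i => e i + (c * lam (e i) x) • x, fun i => f i + (c * lam (f i) x) • x,
    move_hyp lam halt ⟨h1, h2, h3⟩ x c, ?_, ?_, ?_, ?_, ?_⟩
  · intro v hve hvf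
    have hvx : lam v x = 0 := by rw [pair, hve 0, hve 1, hvf 0, hvf 1]; ring
    exact ⟨fun i => by rw [move_orth lam v _ x c hvx]; exact hve i,
      fun i => by rw [move_orth lam v _ x c hvx]; exact hvf i⟩
  · rw [move_l lam l, hex0, hlx]
  · rw [move_l lam l, hfx0, hlx]; ring
  · rw [move_l lam l, hex1, hlx]
  · rw [move_l lam l, hfx1, hlx]; ring

def Mv (v w : R × R × R × R) : Prop := ∃ p q r s c : R,
  w.1 = v.1 + c * q * (p * v.1 + q * v.2.1 + r * v.2.2.1 + s * v.2.2.2) ∧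
  w.2.1 = v.2.1 - c * p * (p * v.1 + q * v.2.1 + r * v.2.2.1 + s * v.2.2.2) ∧
  w.2.2.1 = v.2.2.1 + c * s * (p * v.1 + q * v.2.1 + r * v.2.2.1 + s * v.2.2.2) ∧
  w.2.2.2 = v.2.2.2 - c * r * (p * v.1 + q * v.2.1 + r * v.2.2.1 + s * v.2.2.2)

def Rch : R × R × R × R → R × R × R × R → Prop := Relation.ReflTransGen Mv

lemma rch_smul (d : R) {v w : R × R × R × R} (h : Rch v w) :
    Rch (d * v.1, d * v.2.1, d * v.2.2.1, d * v.2.2.2)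
        (d * w.1, d * w.2.1, d * w.2.2.1, d * w.2.2.2) := by
  induction h with
  | refl => exact Relation.ReflTransGen.refl
  | tail _ hmv ih =>
    refine Relation.ReflTransGen.tail ih ?_
    obtain ⟨p, q, r, s, c, h1, h2, h3, h4⟩ := hmv
    exact ⟨p, q, r, s, c, by rw [h1]; ring, by rw [h2]; ring, by rw [h3]; ring,
      by rw [h4]; ring⟩

/-- core algorithm, case `A ≠ 0`. -/
lemma alg2 (a b A B u v w z : R) (hA : A ≠ 0) (h1 : u*a + v*b + w*A + z*B = 1) :
    ∃ A' B', Rch (a, b, A, B) ((0:R), (0:R), A', B') := by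
  -- m = gcd(A,B)
  obtain ⟨m, hm⟩ := (IsPrincipalIdealRing.principal (Ideal.span ({A, B} : Set R))).principal
  rw [Ideal.submodule_span_eq] at hm
  have hAm : m ∣ A := by
    rw [← Ideal.mem_span_singleton, ← hm]
    exact Ideal.subset_span (Set.mem_insert _ _)
  have hBm : m ∣ B := by
    rw [← Ideal.mem_span_singleton, ← hm]
    exact Ideal.subset_span (Set.mem_insert_of_mem _ rfl)
  obtain ⟨A₁, hA₁⟩ := hAm
  obtain ⟨B₁, hB₁⟩ := hBm
  have hmne : m ≠ 0 := by
    rintro rfl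
    exact hA (by rw [hA₁]; ring)
  obtain ⟨γ, δ, hγδ⟩ : ∃ γ δ : R, γ * A + δ * B = m := by
    rw [← Ideal.mem_span_pair, hm, Ideal.mem_span_singleton]
  obtain ⟨c₁, hcop1⟩ := crt_step m hmne b a
    ⟨v, u, w * A₁ + z * B₁, by rw [hA₁, hB₁] at h1; linear_combination h1⟩
  obtain ⟨α, β, hαβ⟩ := hcop1
  obtain ⟨c₂, hcop2⟩ := crt_step A hA B (b + c₁ * a)
    ⟨β * δ, α, β * γ, by linear_combination hαβ + β * hγδ⟩
  have hcop2' : IsCoprime (B + c₂ * (b + c₁*a) + A * c₂) A := hcop2.add_mul_left_left c₂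
  obtain ⟨σ, τ, hστ⟩ := hcop2'
  -- move 1 : (a, b, A, B) → (a, b + c₁ a, A, B)
  have mv1 : Mv ((a, b, A, B) : R × R × R × R) (a, b + c₁*a, A, B) :=
    ⟨1, 0, 0, 0, -c₁, by ring, by ring, by ring, by ring⟩
  -- move 2
  set b₂ := b + c₁*a with hb₂
  set a₂ := a - c₂*(b₂ + A) with ha₂
  set B₂ := B + c₂*(b₂ + A) with hB₂
  have mv2 : Mv ((a, b₂, A, B) : R × R × R × R) (a₂, b₂, A, B₂) :=
    ⟨0, 1, 1, 0, -c₂, by rw [ha₂]; ring, by ring, by ring, by rw [hB₂]; ring⟩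
  have hστ₂ : σ * B₂ + τ * A = 1 := by rw [hB₂]; linear_combination hστ
  -- move 3 : final, kill first two coordinates
  have hS : b₂ * a₂ + (-a₂) * b₂ + τ * A + σ * B₂ = 1 := by linear_combination hστ₂
  refine ⟨A + 1 * σ * (b₂ * a₂ + (-a₂) * b₂ + τ * A + σ * B₂),
    B₂ - 1 * τ * (b₂ * a₂ + (-a₂) * b₂ + τ * A + σ * B₂), ?_⟩
  have mv3 : Mv ((a₂, b₂, A, B₂) : R × R × R × R)
      (0, 0, A + 1 * σ * (b₂ * a₂ + (-a₂) * b₂ + τ * A + σ * B₂),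
        B₂ - 1 * τ * (b₂ * a₂ + (-a₂) * b₂ + τ * A + σ * B₂)) := by
    refine ⟨b₂, -a₂, τ, σ, 1, ?_, ?_, by ring, by ring⟩
    · linear_combination a₂ * hS
    · linear_combination b₂ * hS
  exact (Relation.ReflTransGen.single mv1).tail mv2 |>.tail mv3

/-- core algorithm for unimodular quadruples. -/
lemma alg1 (a b A B u v w z : R) (h1 : u*a + v*b + w*A + z*B = 1) :
    ∃ A' B', Rch (a, b, A, B) ((0:R), (0:R), A', B') := by
  by_cases hA : A ≠ 0
  · exact alg2 a b A B u v w z hA h1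
  push_neg at hA
  subst hA
  by_cases hB : B = 0
  · subst hB
    -- case A = B = 0 : u*a + v*b = 1
    have huv : u*a + v*b = 1 := by linear_combination h1
    have mv1 : Mv ((a, b, 0, 0) : R × R × R × R) (a, b - a, a, 0) :=
      ⟨1, 0, 0, 1, 1, by ring, by ring, by ring, by ring⟩
    have mv2 : Mv ((a, b - a, a, 0) : R × R × R × R)
        (b - a, b - a, a, b - 2*a) :=
      ⟨0, 1, -1, 0, 1, by ring, by ring, by ring, by ring⟩
    have hS : (b-a) * (b-a) + (-(b-a)) * (b-a) + (u + 2*v) * a + v * (b - 2*a) = 1 := by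
      linear_combination huv
    refine ⟨a + 1 * v * ((b-a) * (b-a) + (-(b-a)) * (b-a) + (u + 2*v) * a + v * (b - 2*a)),
      (b - 2*a) - 1 * (u + 2*v) * ((b-a) * (b-a) + (-(b-a)) * (b-a) + (u + 2*v) * a + v * (b - 2*a)),
      ?_⟩
    have mv3 : Mv ((b - a, b - a, a, b - 2*a) : R × R × R × R)
        (0, 0, a + 1 * v * ((b-a) * (b-a) + (-(b-a)) * (b-a) + (u + 2*v) * a + v * (b - 2*a)),
          (b - 2*a) - 1 * (u + 2*v) * ((b-a) * (b-a) + (-(b-a)) * (b-a) + (u + 2*v) * a + v * (b - 2*a))) := by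
      refine ⟨b - a, -(b - a), u + 2*v, v, 1, ?_, ?_, by ring, by ring⟩
      · linear_combination (b - a) * hS
      · linear_combination (b - a) * hS
    exact (Relation.ReflTransGen.single mv1).tail mv2 |>.tail mv3
  · -- case A = 0, B ≠ 0 : first swap to get A ≠ 0
    have mv1 : Mv ((a, b, 0, B) : R × R × R × R) (a, b, B, B) :=
      ⟨0, 0, 0, 1, 1, by ring, by ring, by ring, by ring⟩
    have mv2 : Mv ((a, b, B, B) : R × R × R × R) (a, b, B, 0) :=
      ⟨0, 0, 1, 0, 1, by ring, by ring, by ring, by ring⟩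
    obtain ⟨A', B', hr⟩ := alg2 a b B 0 u v z 0 hB (by linear_combination h1)
    exact ⟨A', B', ((Relation.ReflTransGen.single mv1).tail mv2).trans hr⟩

/-- full algorithm. -/
lemma alg (a b A B : R) : ∃ A' B', Rch (a, b, A, B) ((0:R), (0:R), A', B') := by
  obtain ⟨m₁, hm₁⟩ := (IsPrincipalIdealRing.principal (Ideal.span ({a, b} : Set R))).principal
  obtain ⟨m₂, hm₂⟩ := (IsPrincipalIdealRing.principal (Ideal.span ({A, B} : Set R))).principal
  obtain ⟨d, hd⟩ := (IsPrincipalIdealRing.principal (Ideal.span ({m₁, m₂} : Set R))).principal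
  rw [Ideal.submodule_span_eq] at hm₁ hm₂ hd
  have mem1 : ∀ x : R, x ∈ Ideal.span ({a, b} : Set R) → m₁ ∣ x := by
    intro x hx; rw [hm₁, Ideal.mem_span_singleton] at hx; exact hx
  have mem2 : ∀ x : R, x ∈ Ideal.span ({A, B} : Set R) → m₂ ∣ x := by
    intro x hx; rw [hm₂, Ideal.mem_span_singleton] at hx; exact hx
  have mem3 : ∀ x : R, x ∈ Ideal.span ({m₁, m₂} : Set R) → d ∣ x := by
    intro x hx; rw [hd, Ideal.mem_span_singleton] at hx; exact hx
  have hdm₁ : d ∣ m₁ := mem3 m₁ (Ideal.subset_span (Set.mem_insert _ _))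
  have hdm₂ : d ∣ m₂ := mem3 m₂ (Ideal.subset_span (Set.mem_insert_of_mem _ rfl))
  have hda : d ∣ a := hdm₁.trans (mem1 a (Ideal.subset_span (Set.mem_insert _ _)))
  have hdb : d ∣ b := hdm₁.trans (mem1 b (Ideal.subset_span (Set.mem_insert_of_mem _ rfl)))
  have hdA : d ∣ A := hdm₂.trans (mem2 A (Ideal.subset_span (Set.mem_insert _ _)))
  have hdB : d ∣ B := hdm₂.trans (mem2 B (Ideal.subset_span (Set.mem_insert_of_mem _ rfl)))
  obtain ⟨u₁, v₁, hu₁⟩ := Ideal.mem_span_pair.mp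
    (hm₁ ▸ Ideal.mem_span_singleton_self m₁ : m₁ ∈ Ideal.span ({a, b} : Set R))
  obtain ⟨u₂, v₂, hu₂⟩ := Ideal.mem_span_pair.mp
    (hm₂ ▸ Ideal.mem_span_singleton_self m₂ : m₂ ∈ Ideal.span ({A, B} : Set R))
  obtain ⟨γ, δ, hγδ⟩ := Ideal.mem_span_pair.mp
    (hd ▸ Ideal.mem_span_singleton_self d : d ∈ Ideal.span ({m₁, m₂} : Set R))
  by_cases hdz : d = 0
  · subst hdz
    obtain rfl : a = 0 := zero_dvd_iff.mp hda
    obtain rfl : b = 0 := zero_dvd_iff.mp hdb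
    obtain rfl : A = 0 := zero_dvd_iff.mp hdA
    obtain rfl : B = 0 := zero_dvd_iff.mp hdB
    exact ⟨0, 0, Relation.ReflTransGen.refl⟩
  · obtain ⟨a₀, ha₀⟩ := hda
    obtain ⟨b₀, hb₀⟩ := hdb
    obtain ⟨A₀, hA₀⟩ := hdA
    obtain ⟨B₀, hB₀⟩ := hdB
    have key : (γ*u₁)*a₀ + (γ*v₁)*b₀ + (δ*u₂)*A₀ + (δ*v₂)*B₀ = 1 := by
      apply mul_left_cancel₀ hdz
      rw [ha₀, hb₀] at hu₁; rw [hA₀, hB₀] at hu₂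
      linear_combination γ * hu₁ + δ * hu₂ + hγδ
    obtain ⟨A', B', hr⟩ := alg1 a₀ b₀ A₀ B₀ _ _ _ _ key
    have h2 := rch_smul d hr
    refine ⟨d * A', d * B', ?_⟩
    rw [ha₀, hb₀, hA₀, hB₀]
    simpa using h2

lemma transfer (lam : M →ₗ[R] M →ₗ[R] R) (halt : ∀ v : M, lam v v = 0) (l : M →ₗ[R] R)
    {n : ℕ} {e f : Fin (n+2) → M} (h : HypFam lam e f) {vf : R × R × R × R}
    (hr : Rch (l (e 0), l (f 0), l (e 1), l (f 1)) vf) :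
    ∃ e' f' : Fin (n+2) → M, HypFam lam e' f' ∧
      (∀ v : M, (∀ i, lam v (e i) = 0) → (∀ i, lam v (f i) = 0) →
        (∀ i, lam v (e' i) = 0) ∧ (∀ i, lam v (f' i) = 0)) ∧
      l (e' 0) = vf.1 ∧ l (f' 0) = vf.2.1 ∧ l (e' 1) = vf.2.2.1 ∧ l (f' 1) = vf.2.2.2 := by
  induction hr with
  | refl => exact ⟨e, f, h, fun v hve hvf => ⟨hve, hvf⟩, rfl, rfl, rfl, rfl⟩
  | @tail u w hr' hmv ih =>
    obtain ⟨e₂, f₂, h₂, horth₂, hv1, hv2, hv3, hv4⟩ := ih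
    obtain ⟨p, q, r, s, c, w1, w2, w3, w4⟩ := hmv
    obtain ⟨e₃, f₃, h₃, horth₃, g1, g2, g3, g4⟩ := step lam halt l h₂ p q r s c
    refine ⟨e₃, f₃, h₃, ?_, ?_, ?_, ?_, ?_⟩
    · intro v hve hvf
      obtain ⟨he2, hf2⟩ := horth₂ v hve hvf
      exact horth₃ v he2 hf2
    · rw [g1, hv1, hv2, hv3, hv4, ← w1]
    · rw [g2, hv1, hv2, hv3, hv4, ← w2]
    · rw [g3, hv1, hv2, hv3, hv4, ← w3]
    · rw [g4, hv1, hv2, hv3, hv4, ← w4]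


lemma step_zero (lam : M →ₗ[R] M →ₗ[R] R) (halt : ∀ v : M, lam v v = 0) (l : M →ₗ[R] R)
    {n : ℕ} {e f : Fin (n+2) → M} (h : HypFam lam e f) :
    ∃ e' f' : Fin (n+2) → M, HypFam lam e' f' ∧
      (∀ v : M, (∀ i, lam v (e i) = 0) → (∀ i, lam v (f i) = 0) →
        (∀ i, lam v (e' i) = 0) ∧ (∀ i, lam v (f' i) = 0)) ∧
      l (e' 0) = 0 ∧ l (f' 0) = 0 := by
  obtain ⟨A', B', hr⟩ := alg (l (e 0)) (l (f 0)) (l (e 1)) (l (f 1))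
  obtain ⟨e', f', h', horth, hv1, hv2, _, _⟩ := transfer lam halt l h hr
  exact ⟨e', f', h', horth, hv1, hv2⟩

lemma main_lemma (lam : M →ₗ[R] M →ₗ[R] R) (halt : ∀ v : M, lam v v = 0) (l : M →ₗ[R] R) :
    ∀ (n : ℕ) (e f : Fin (n+1) → M), HypFam lam e f →
    ∃ e' f' : Fin n → M, HypFam lam e' f' ∧ (∀ i, l (e' i) = 0) ∧ (∀ i, l (f' i) = 0) ∧
      (∀ v : M, (∀ i, lam v (e i) = 0) → (∀ i, lam v (f i) = 0) →
        (∀ i, lam v (e' i) = 0) ∧ (∀ i, lam v (f' i) = 0)) := by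
  intro n
  induction n with
  | zero =>
    intro e f h
    exact ⟨Fin.elim0, Fin.elim0, ⟨fun i => i.elim0, fun i => i.elim0, fun i => i.elim0⟩,
      fun i => i.elim0, fun i => i.elim0, fun v _ _ => ⟨fun i => i.elim0, fun i => i.elim0⟩⟩
  | succ n ih =>
    intro e f h
    obtain ⟨eA, fA, hA, horth, he0, hf0⟩ := step_zero lam halt l h
    set E : Fin (n+1) → M := fun i => eA i.succ with hE
    set F : Fin (n+1) → M := fun i => fA i.succ with hF
    have hEF : HypFam lam E F := by
      refine ⟨fun i j => ?_, fun i j => hA.2.1 _ _, fun i j => hA.2.2 _ _⟩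
      rw [hE, hF]
      simp only
      rw [hA.1 i.succ j.succ]
      simp [Fin.succ_inj]
    obtain ⟨e'', f'', h'', hze, hzf, horth₂⟩ := ih E F hEF
    -- orthogonality of the 0-th pair to the subfamily
    have he0E : ∀ i, lam (eA 0) (E i) = 0 := fun i => hA.2.1 0 i.succ
    have he0F : ∀ i, lam (eA 0) (F i) = 0 := fun i => by
      rw [hF]; simp only
      rw [hA.1 0 i.succ, if_neg (Ne.symm (Fin.succ_ne_zero i))]
    have hf0E : ∀ i, lam (fA 0) (E i) = 0 := fun i => by
      rw [hE]; simp only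
      rw [lam_skew lam halt, hA.1 i.succ 0, if_neg (Fin.succ_ne_zero i), neg_zero]
    have hf0F : ∀ i, lam (fA 0) (F i) = 0 := fun i => hA.2.2 0 i.succ
    obtain ⟨hoe1, hoe2⟩ := horth₂ (eA 0) he0E he0F
    obtain ⟨hof1, hof2⟩ := horth₂ (fA 0) hf0E hf0F
    refine ⟨Fin.cons (eA 0) e'', Fin.cons (fA 0) f'', ⟨?_, ?_, ?_⟩, ?_, ?_, ?_⟩
    · intro i j
      induction i using Fin.cases with
      | zero =>
        induction j using Fin.cases with
        | zero => simpa using hA.1 0 0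
        | succ j' =>
          rw [Fin.cons_zero, Fin.cons_succ, hoe2 j', if_neg (Ne.symm (Fin.succ_ne_zero j'))]
      | succ i' =>
        induction j using Fin.cases with
        | zero =>
          rw [Fin.cons_succ, Fin.cons_zero, lam_skew lam halt, hof1 i', neg_zero,
            if_neg (Fin.succ_ne_zero i')]
        | succ j' =>
          rw [Fin.cons_succ, Fin.cons_succ, h''.1 i' j']
          simp [Fin.succ_inj]
    · intro i j
      induction i using Fin.cases with
      | zero =>
        induction j using Fin.cases with
        | zero => exact halt _
        | succ j' => rw [Fin.cons_zero, Fin.cons_succ, hoe1 j']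
      | succ i' =>
        induction j using Fin.cases with
        | zero =>
          rw [Fin.cons_succ, Fin.cons_zero, lam_skew lam halt, hoe1 i', neg_zero]
        | succ j' => rw [Fin.cons_succ, Fin.cons_succ]; exact h''.2.1 i' j'
    · intro i j
      induction i using Fin.cases with
      | zero =>
        induction j using Fin.cases with
        | zero => exact halt _
        | succ j' => rw [Fin.cons_zero, Fin.cons_succ, hof2 j']
      | succ i' =>
        induction j using Fin.cases with
        | zero =>
          rw [Fin.cons_succ, Fin.cons_zero, lam_skew lam halt, hof2 i', neg_zero]
        | succ j' => rw [Fin.cons_succ, Fin.cons_succ]; exact h''.2.2 i' j'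
    · intro i
      induction i using Fin.cases with
      | zero => rw [Fin.cons_zero]; exact he0
      | succ i' => rw [Fin.cons_succ]; exact hze i'
    · intro i
      induction i using Fin.cases with
      | zero => rw [Fin.cons_zero]; exact hf0
      | succ i' => rw [Fin.cons_succ]; exact hzf i'
    · intro v hve hvf
      obtain ⟨hve2, hvf2⟩ := horth v hve hvf
      have hvE : ∀ i, lam v (E i) = 0 := fun i => hve2 i.succ
      have hvF : ∀ i, lam v (F i) = 0 := fun i => hvf2 i.succ
      obtain ⟨hv1, hv2⟩ := horth₂ v hvE hvF
      constructor
      · intro i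
        induction i using Fin.cases with
        | zero => rw [Fin.cons_zero]; exact hve2 0
        | succ i' => rw [Fin.cons_succ]; exact hv1 i'
      · intro i
        induction i using Fin.cases with
        | zero => rw [Fin.cons_zero]; exact hvf2 0
        | succ i' => rw [Fin.cons_succ]; exact hv2 i'

lemma hyp_card_le (lam : M →ₗ[R] M →ₗ[R] R) (halt : ∀ v : M, lam v v = 0)
    [Module.Finite R M] {g : ℕ} (e f : Fin g → M) (h : HypFam lam e f) :
    g ≤ Module.finrank R M := by
  classical
  have hli : LinearIndependent R (Sum.elim e f) := by
    rw [Fintype.linearIndependent_iff]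
    intro c hc
    have key : ∀ u : M, lam (∑ i, c i • Sum.elim e f i) u = 0 := by
      intro u; rw [hc]; simp
    have hce : ∀ j, c (Sum.inl j) = 0 := by
      intro j
      have h2 := key (f j)
      rw [map_sum, LinearMap.sum_apply, Fintype.sum_sum_type] at h2
      simpa only [Sum.elim_inl, Sum.elim_inr, map_smul, LinearMap.smul_apply, smul_eq_mul,
        h.1, h.2.2, mul_ite, mul_one, mul_zero, Finset.sum_ite_eq', Finset.mem_univ,
        if_true, Finset.sum_const_zero, add_zero] using h2
    have hcf : ∀ j, c (Sum.inr j) = 0 := by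
      intro j
      have h2 := key (e j)
      rw [map_sum, LinearMap.sum_apply, Fintype.sum_sum_type] at h2
      have hsk : ∀ i, lam (f i) (e j) = - lam (e j) (f i) := fun i =>
        lam_skew lam halt _ _
      simpa only [Sum.elim_inl, Sum.elim_inr, map_smul, LinearMap.smul_apply, smul_eq_mul,
        h.1, h.2.1, hsk, mul_ite, mul_one, mul_zero, mul_neg, neg_zero, Finset.sum_ite_eq',
        Finset.mem_univ, if_true, Finset.sum_const_zero, zero_add, neg_eq_zero,
        Finset.sum_ite_eq, Finset.sum_neg_distrib] using h2
    intro i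
    cases i with
    | inl j => exact hce j
    | inr j => exact hcf j
  have h2g := hli.fintype_card_le_finrank
  simp only [Fintype.card_sum, Fintype.card_fin] at h2g
  omega

end GHAux

/-- The hyperbolic genus of a module with a bilinear form: the largest `g` for which there is a
hyperbolic family `e₁, f₁, …, e_g, f_g`. -/
noncomputable def gH (R : Type) [CommRing R] (M : Type) (lam : M → M → R) : ℕ :=
  sSup {g : ℕ | ∃ e f : Fin g → M,
    (∀ i j, lam (e i) (f j) = if i = j then 1 else 0) ∧
    (∀ i j, lam (e i) (e j) = 0) ∧ (∀ i j, lam (f i) (f j) = 0)}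

/-- over a PID, for any linear functional `l : M → R` on a formed space
`(M, λ)`, the hyperbolic genus of `(ker l, λ|_{ker l})` is at least `g_H(M, λ) - 1`. -/
theorem gH_ker_ge
    (R : Type) [CommRing R] [IsDomain R] [IsPrincipalIdealRing R]
    (M : Type) [AddCommGroup M] [Module R M] [Module.Finite R M] [Module.Free R M]
    (lam : M →ₗ[R] M →ₗ[R] R) (halt : ∀ v : M, lam v v = 0)
    (l : M →ₗ[R] R) :
    gH R M (fun x y => lam x y) - 1 ≤
      gH R ↥(LinearMap.ker l) (fun x y => lam (x : M) (y : M)) := by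
  classical
  set SM := {g : ℕ | ∃ e f : Fin g → M,
    (∀ i j, lam (e i) (f j) = if i = j then 1 else 0) ∧
    (∀ i j, lam (e i) (e j) = 0) ∧ (∀ i j, lam (f i) (f j) = 0)} with hSM
  set SK := {g : ℕ | ∃ e f : Fin g → ↥(LinearMap.ker l),
    (∀ i j, lam ((e i) : M) ((f j) : M) = if i = j then 1 else 0) ∧
    (∀ i j, lam ((e i) : M) ((e j) : M) = 0) ∧
    (∀ i j, lam ((f i) : M) ((f j) : M) = 0)} with hSK
  have hgH1 : gH R M (fun x y => lam x y) = sSup SM := rfl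
  have hgH2 : gH R ↥(LinearMap.ker l) (fun x y => lam (x : M) (y : M)) = sSup SK := rfl
  rw [hgH1, hgH2]
  have hSMmem : ∀ g ∈ SM, ∃ e f : Fin g → M, HypFam lam e f := fun g hg => by
    obtain ⟨e, f, h1, h2, h3⟩ := hg; exact ⟨e, f, h1, h2, h3⟩
  have hbddM : BddAbove SM := by
    refine ⟨Module.finrank R M, fun g hg => ?_⟩
    obtain ⟨e, f, hef⟩ := hSMmem g hg
    exact hyp_card_le lam halt e f hef
  have hbddK : BddAbove SK := by
    refine ⟨Module.finrank R M, fun g hg => ?_⟩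
    obtain ⟨e, f, h1, h2, h3⟩ := hg
    exact hyp_card_le lam halt (fun i => ((e i) : M)) (fun i => ((f i) : M)) ⟨h1, h2, h3⟩
  have h0M : (0 : ℕ) ∈ SM :=
    ⟨Fin.elim0, Fin.elim0, fun i => i.elim0, fun i => i.elim0, fun i => i.elim0⟩
  have hmem := Nat.sSup_mem (⟨0, h0M⟩ : SM.Nonempty) hbddM
  by_cases hz : sSup SM = 0
  · rw [hz]; exact Nat.zero_le _
  · obtain ⟨n, hn⟩ := Nat.exists_eq_succ_of_ne_zero hz
    rw [hn] at hmem
    obtain ⟨e, f, hef⟩ := hSMmem (n+1) hmem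
    obtain ⟨e', f', hef', hze, hzf, _⟩ := main_lemma lam halt l n e f hef
    have hnK : n ∈ SK := by
      refine ⟨fun i => ⟨e' i, LinearMap.mem_ker.mpr (hze i)⟩,
        fun i => ⟨f' i, LinearMap.mem_ker.mpr (hzf i)⟩, ?_, ?_, ?_⟩
      · exact hef'.1
      · exact hef'.2.1
      · exact hef'.2.2
    have hle := le_csSup hbddK hnK
    rw [hn]
    omega
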